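/- arXiv:2105.12452 — 2 statements merged into one kernel-verified Lean document; each statement's English description precedes it below -/
import Mathlib

section
/- Every straight-line RAC drawing of a graph is fan-crossing-free: in a straight-line drawing in which any two crossing edges cross at a right angle, no edge crosses two edges that share a common endpoint. -/
open Set

noncomputable section

/-- A drawing of a simple graph in the plane: vertices are mapped to distinct
points, each edge `uv` is drawn as a simple arc joining the images of `u` and
`v` and avoiding the images of the other vertices, any two arcs meet in
finitely many points, and no three arcs pass through a common non-vertex
point. -/
structure Drawing {V : Type} (G : SimpleGraph V) where
  vpos : V → ℝ × ℝ
  vpos_inj : Function.Injective vpos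
  arc : V → V → ℝ → ℝ × ℝ
  arc_symm : ∀ u v t, arc u v t = arc v u (1 - t)
  arc_cont : ∀ u v, G.Adj u v → ContinuousOn (arc u v) (Set.Icc 0 1)
  arc_injOn : ∀ u v, G.Adj u v → Set.InjOn (arc u v) (Set.Icc 0 1)
  arc_start : ∀ u v, G.Adj u v → arc u v 0 = vpos u
  arc_end : ∀ u v, G.Adj u v → arc u v 1 = vpos v
  arc_avoids : ∀ u v, G.Adj u v → ∀ t ∈ Set.Ioo (0:ℝ) 1, arc u v t ∉ Set.range vpos
  inter_finite : ∀ u v w z, G.Adj u v → G.Adj w z → s(u, v) ≠ s(w, z) →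
    ((arc u v '' Set.Icc 0 1) ∩ (arc w z '' Set.Icc 0 1)).Finite
  no_triple_point : ∀ p : ℝ × ℝ, p ∉ Set.range vpos →
    ∀ u₁ v₁ u₂ v₂ u₃ v₃, G.Adj u₁ v₁ → G.Adj u₂ v₂ → G.Adj u₃ v₃ →
      s(u₁, v₁) ≠ s(u₂, v₂) → s(u₁, v₁) ≠ s(u₃, v₃) → s(u₂, v₂) ≠ s(u₃, v₃) →
      ¬ (p ∈ arc u₁ v₁ '' Set.Icc 0 1 ∧ p ∈ arc u₂ v₂ '' Set.Icc 0 1 ∧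
          p ∈ arc u₃ v₃ '' Set.Icc 0 1)

namespace Drawing

variable {V : Type} {G : SimpleGraph V}

lemma img_symm_aux (Γ : Drawing G) (u v : V) :
    Γ.arc u v '' Set.Icc 0 1 = Γ.arc v u '' Set.Icc 0 1 := by
  have key : ∀ a b : V, Γ.arc a b '' Set.Icc 0 1 ⊆ Γ.arc b a '' Set.Icc 0 1 := by
    rintro a b p ⟨t, ht, rfl⟩
    refine ⟨1 - t, ⟨by linarith [ht.2], by linarith [ht.1]⟩, ?_⟩
    rw [Γ.arc_symm b a (1 - t)]
    congr 1
    ring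
  exact Set.Subset.antisymm (key u v) (key v u)

/-- The image (trace) of an edge in the drawing. -/
def img (Γ : Drawing G) (e : Sym2 V) : Set (ℝ × ℝ) :=
  Sym2.lift ⟨fun u v => Γ.arc u v '' Set.Icc 0 1, fun u v => Γ.img_symm_aux u v⟩ e

/-- `p` is a crossing point of the two distinct edges `e` and `f` : it lies on
both arcs and is not the image of a vertex (so it is not a shared endpoint). -/
def Crossing (Γ : Drawing G) (e f : Sym2 V) (p : ℝ × ℝ) : Prop :=
  e ∈ G.edgeSet ∧ f ∈ G.edgeSet ∧ e ≠ f ∧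
    p ∈ Γ.img e ∧ p ∈ Γ.img f ∧ p ∉ Set.range Γ.vpos

/-- The edges `e` and `f` cross in the drawing. -/
def Crosses (Γ : Drawing G) (e f : Sym2 V) : Prop := ∃ p, Γ.Crossing e f p

/-- The set of crossing points of a drawing. -/
def crossingSet (Γ : Drawing G) : Set (ℝ × ℝ) := {p | ∃ e f, Γ.Crossing e f p}

/-- The number of crossings of a drawing. -/
def crossings (Γ : Drawing G) : ℕ := Γ.crossingSet.ncard

/-- The set of crossing points lying on a given edge. -/
def edgeCrossings (Γ : Drawing G) (e : Sym2 V) : Set (ℝ × ℝ) :=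
  {p | ∃ f, Γ.Crossing e f p}

/-- A drawing is `k`-planar if every edge is involved in at most `k` crossings. -/
def IsKPlanar (Γ : Drawing G) (k : ℕ) : Prop :=
  ∀ e ∈ G.edgeSet, (Γ.edgeCrossings e).ncard ≤ k

/-- A drawing is `k`-gap-planar if each crossing can be assigned to one of its
two involved edges such that every edge is assigned at most `k` crossings. -/
def IsKGapPlanar (Γ : Drawing G) (k : ℕ) : Prop :=
  ∃ assign : ℝ × ℝ → Sym2 V,
    (∀ p ∈ Γ.crossingSet, ∃ f, Γ.Crossing (assign p) f p) ∧
    ∀ e : Sym2 V, {p | p ∈ Γ.crossingSet ∧ assign p = e}.ncard ≤ k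

/-- A drawing is skewness-`k` if there is a set of at most `k` edges such that
every crossing involves an edge from the set. -/
def IsSkewness (Γ : Drawing G) (k : ℕ) : Prop :=
  ∃ S : Finset (Sym2 V), S.card ≤ k ∧
    ∀ p ∈ Γ.crossingSet, ∃ e ∈ S, ∃ f, Γ.Crossing e f p

/-- A drawing is `k`-apex if there is a set of at most `k` vertices such that
every crossing involves an edge incident to one of these vertices. -/
def IsKApex (Γ : Drawing G) (k : ℕ) : Prop :=
  ∃ S : Finset V, S.card ≤ k ∧
    ∀ p ∈ Γ.crossingSet, ∃ e f, Γ.Crossing e f p ∧ ∃ a ∈ S, a ∈ e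

/-- A drawing is `(k,l)`-grid-free if there is no set of `k` edges each of
which crosses each edge of some set of `l` edges. -/
def IsGridFree (Γ : Drawing G) (k l : ℕ) : Prop :=
  ¬ ∃ A B : Finset (Sym2 V), A.card = k ∧ B.card = l ∧
      ∀ e ∈ A, ∀ f ∈ B, Γ.Crosses e f

/-- A drawing is `k`-fan-crossing-free if no edge crosses `k` edges that all
share a common endpoint. -/
def IsKFanCrossingFree (Γ : Drawing G) (k : ℕ) : Prop :=
  ¬ ∃ (e : Sym2 V) (a : V) (F : Finset (Sym2 V)), F.card = k ∧
      ∀ f ∈ F, a ∈ f ∧ Γ.Crosses e f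

/-- A drawing is planarly connected if for any two crossing edges, two of
their endpoints are joined by a crossing-free edge. -/
def IsPlanarlyConnected (Γ : Drawing G) : Prop :=
  ∀ e f : Sym2 V, Γ.Crosses e f →
    ∃ a b : V, a ∈ e ∧ b ∈ f ∧ G.Adj a b ∧ Γ.edgeCrossings s(a, b) = ∅

/-- A drawing is straight-line if every edge is drawn as the line segment
between the images of its endpoints. -/
def IsStraight (Γ : Drawing G) : Prop :=
  ∀ u v : V, G.Adj u v → ∀ t ∈ Set.Icc (0:ℝ) 1,
    Γ.arc u v t = (1 - t) • Γ.vpos u + t • Γ.vpos v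

/-- A straight-line RAC drawing: straight-line and any two crossing edges are
perpendicular. -/
def IsRAC (Γ : Drawing G) : Prop :=
  Γ.IsStraight ∧
    ∀ u v w z : V, G.Adj u v → G.Adj w z → Γ.Crosses s(u, v) s(w, z) →
      (Γ.vpos v - Γ.vpos u).1 * (Γ.vpos z - Γ.vpos w).1 +
        (Γ.vpos v - Γ.vpos u).2 * (Γ.vpos z - Γ.vpos w).2 = 0

end Drawing

/-- The crossing number of `G`: the minimum number of crossings over all
drawings of `G`. -/
def crNum {V : Type} (G : SimpleGraph V) : ℕ :=
  sInf {n | ∃ Γ : Drawing G, Γ.crossings = n}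

/-- The crossing number of `G` restricted to drawings satisfying `P`. -/
def crNumRestricted {V : Type} (G : SimpleGraph V) (P : Drawing G → Prop) : ℕ :=
  sInf {n | ∃ Γ : Drawing G, P Γ ∧ Γ.crossings = n}

/-- The rectilinear crossing number of `G`. -/
def rectCrNum {V : Type} (G : SimpleGraph V) : ℕ :=
  crNumRestricted G (fun Γ => Γ.IsStraight)

/-- An ℓ₂-bundle between `x` and `y`: `P` is the set of the internal vertices
of ℓ internally disjoint paths of length two from `x` to `y`, all of whose
internal vertices have degree exactly two in `G` (here ℓ = `P.card`). -/
def IsL2Bundle {V : Type} (G : SimpleGraph V) (x y : V) (P : Finset V) : Prop :=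
  x ≠ y ∧ x ∉ P ∧ y ∉ P ∧
    ∀ p ∈ P, G.Adj x p ∧ G.Adj p y ∧ (G.neighborSet p).ncard = 2

/-- Two drawings of `G` are weakly isomorphic: there is an incidence-preserving
one-to-one correspondence of vertices and edges that preserves crossings. -/
def WeaklyIso {V : Type} {G : SimpleGraph V} (Γ Γ' : Drawing G) : Prop :=
  ∃ φ : G ≃g G, ∀ e f : Sym2 V,
    Γ.Crosses e f ↔ Γ'.Crosses (Sym2.map (fun a => φ a) e) (Sym2.map (fun a => φ a) f)

/-- Every straight-line RAC drawing is fan-crossing-free: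
in a straight-line drawing in which any two crossing edges cross at a right
angle, no edge crosses two edges sharing a common endpoint. -/
theorem rac_is_fan_crossing_free {V : Type} (G : SimpleGraph V)
    (Γ : Drawing G) (hRAC : Γ.IsRAC) :
    Γ.IsKFanCrossingFree 2 := by
  classical
  rintro ⟨e, a, F, hcard, hF⟩
  obtain ⟨f₁, f₂, hne, rfl⟩ := Finset.card_eq_two.mp hcard
  induction e using Sym2.ind with
  | _ u v =>
  obtain ⟨ha1, p₁, hc₁⟩ := hF f₁ (by simp)
  obtain ⟨ha2, p₂, hc₂⟩ := hF f₂ (by simp)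
  obtain ⟨b₁, rfl⟩ := Sym2.mem_iff_exists.mp ha1
  obtain ⟨b₂, rfl⟩ := Sym2.mem_iff_exists.mp ha2
  obtain ⟨heE, hf₁E, hef₁, hpe₁, hpf₁, hpv₁⟩ := hc₁
  obtain ⟨-, hf₂E, hef₂, hpe₂, hpf₂, hpv₂⟩ := hc₂
  have huv : G.Adj u v := heE
  have hab₁ : G.Adj a b₁ := hf₁E
  have hab₂ : G.Adj a b₂ := hf₂E
  have hS := hRAC.1
  -- extract straight-line parametrizations
  simp only [Drawing.img, Sym2.lift_mk] at hpe₁ hpf₁ hpe₂ hpf₂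
  obtain ⟨t₁, ht₁, hT₁⟩ := hpe₁
  obtain ⟨t₂, ht₂, hT₂⟩ := hpe₂
  obtain ⟨s₁, hs₁, hS₁⟩ := hpf₁
  obtain ⟨s₂, hs₂, hS₂⟩ := hpf₂
  have e₁ : p₁ = (1 - t₁) • Γ.vpos u + t₁ • Γ.vpos v := by
    rw [← hT₁, hS u v huv t₁ ht₁]
  have e₂ : p₂ = (1 - t₂) • Γ.vpos u + t₂ • Γ.vpos v := by
    rw [← hT₂, hS u v huv t₂ ht₂]
  have g₁ : p₁ = (1 - s₁) • Γ.vpos a + s₁ • Γ.vpos b₁ := by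
    rw [← hS₁, hS a b₁ hab₁ s₁ hs₁]
  have g₂ : p₂ = (1 - s₂) • Γ.vpos a + s₂ • Γ.vpos b₂ := by
    rw [← hS₂, hS a b₂ hab₂ s₂ hs₂]
  -- perpendicularity
  have hperp₁ := hRAC.2 u v a b₁ huv hab₁
    ⟨p₁, heE, hf₁E, hef₁, by simpa [Drawing.img] using ⟨t₁, ht₁, hT₁⟩,
      by simpa [Drawing.img] using ⟨s₁, hs₁, hS₁⟩, hpv₁⟩
  have hperp₂ := hRAC.2 u v a b₂ huv hab₂
    ⟨p₂, heE, hf₂E, hef₂, by simpa [Drawing.img] using ⟨t₂, ht₂, hT₂⟩,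
      by simpa [Drawing.img] using ⟨s₂, hs₂, hS₂⟩, hpv₂⟩
  set U := Γ.vpos u with hU
  set Vv := Γ.vpos v with hV
  set A := Γ.vpos a with hA
  set B₁ := Γ.vpos b₁
  set B₂ := Γ.vpos b₂
  have hUV : U ≠ Vv := fun h => huv.ne (Γ.vpos_inj h)
  have hd : (Vv.1 - U.1) ^ 2 + (Vv.2 - U.2) ^ 2 ≠ 0 := by
    intro h
    apply hUV
    have h1 : Vv.1 - U.1 = 0 := by nlinarith [sq_nonneg (Vv.1 - U.1), sq_nonneg (Vv.2 - U.2)]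
    have h2 : Vv.2 - U.2 = 0 := by nlinarith [sq_nonneg (Vv.1 - U.1), sq_nonneg (Vv.2 - U.2)]
    exact Prod.ext (by linarith) (by linarith)
  have e₁1 : p₁.1 = (1 - t₁) * U.1 + t₁ * Vv.1 := by rw [e₁]; simp [Prod.smul_def]
  have e₁2 : p₁.2 = (1 - t₁) * U.2 + t₁ * Vv.2 := by rw [e₁]; simp [Prod.smul_def]
  have e₂1 : p₂.1 = (1 - t₂) * U.1 + t₂ * Vv.1 := by rw [e₂]; simp [Prod.smul_def]
  have e₂2 : p₂.2 = (1 - t₂) * U.2 + t₂ * Vv.2 := by rw [e₂]; simp [Prod.smul_def]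
  have g₁1 : p₁.1 = (1 - s₁) * A.1 + s₁ * B₁.1 := by rw [g₁]; simp [Prod.smul_def]
  have g₁2 : p₁.2 = (1 - s₁) * A.2 + s₁ * B₁.2 := by rw [g₁]; simp [Prod.smul_def]
  have g₂1 : p₂.1 = (1 - s₂) * A.1 + s₂ * B₂.1 := by rw [g₂]; simp [Prod.smul_def]
  have g₂2 : p₂.2 = (1 - s₂) * A.2 + s₂ * B₂.2 := by rw [g₂]; simp [Prod.smul_def]
  have key : (t₂ - t₁) * ((Vv.1 - U.1) ^ 2 + (Vv.2 - U.2) ^ 2) = 0 := by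
    have expand : (t₂ - t₁) * ((Vv.1 - U.1) ^ 2 + (Vv.2 - U.2) ^ 2)
        = (Vv.1 - U.1) * (p₂.1 - p₁.1) + (Vv.2 - U.2) * (p₂.2 - p₁.2) := by
      rw [e₁1, e₁2, e₂1, e₂2]; ring
    rw [expand, g₁1, g₁2, g₂1, g₂2]
    have h1 : (Vv.1 - U.1) * (B₁.1 - A.1) + (Vv.2 - U.2) * (B₁.2 - A.2) = 0 := hperp₁
    have h2 : (Vv.1 - U.1) * (B₂.1 - A.1) + (Vv.2 - U.2) * (B₂.2 - A.2) = 0 := hperp₂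
    linear_combination s₂ * h2 - s₁ * h1
  have htt : t₂ = t₁ := by
    rcases mul_eq_zero.mp key with h | h
    · linarith
    · exact absurd h hd
  have hpp : p₂ = p₁ := by
    apply Prod.ext
    · rw [e₁1, e₂1, htt]
    · rw [e₁2, e₂2, htt]
  have hf₁f₂ : s(a, b₁) ≠ s(a, b₂) := hne
  exact Γ.no_triple_point p₁ hpv₁ u v a b₁ a b₂ huv hab₁ hab₂ hef₁ hef₂ hf₁f₂
    ⟨⟨t₁, ht₁, hT₁⟩, ⟨s₁, hs₁, hS₁⟩, ⟨s₂, hs₂, hpp ▸ hS₂⟩⟩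
end
end

section
/- Let G be a graph containing an ℓ₂-bundle B between vertices u and v, and let Γ be a k-fan-crossing-free drawing of G. If ℓ ≥ 2k − 1, then no single edge of G crosses all ℓ paths of B in Γ; more precisely, an edge that crosses all ℓ paths of B crosses at least ⌈ℓ/2⌉ edges incident to u or at least ⌈ℓ/2⌉ edges incident to v, contradicting k-fan-crossing-freeness. -/
open Set

noncomputable section

/-- Let `B` be an ℓ₂-bundle between `u` and `v` in `G` and
let `Γ` be a `k`-fan-crossing-free drawing of `G`. Any edge that crosses all
`ℓ` paths of `B` crosses at least `⌈ℓ/2⌉` edges incident to `u` or at least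
`⌈ℓ/2⌉` edges incident to `v`; in particular if `ℓ ≥ 2k - 1` then no single
edge of `G` crosses all `ℓ` paths of `B` in `Γ`. -/
theorem no_edge_crosses_whole_bundle {V : Type} (G : SimpleGraph V) (k ℓ : ℕ)
    (u v : V) (P : Finset V) (hB : IsL2Bundle G u v P) (hcard : P.card = ℓ)
    (Γ : Drawing G) (hΓ : Γ.IsKFanCrossingFree k) :
    (∀ e : Sym2 V, e ∈ G.edgeSet →
      (∀ q ∈ P, Γ.Crosses e s(u, q) ∨ Γ.Crosses e s(q, v)) →
      ((ℓ + 1) / 2 ≤ {f : Sym2 V | f ∈ G.edgeSet ∧ u ∈ f ∧ Γ.Crosses e f}.ncard ∨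
        (ℓ + 1) / 2 ≤ {f : Sym2 V | f ∈ G.edgeSet ∧ v ∈ f ∧ Γ.Crosses e f}.ncard)) ∧
    (2 * k - 1 ≤ ℓ →
      ¬ ∃ e : Sym2 V, e ∈ G.edgeSet ∧
          ∀ q ∈ P, Γ.Crosses e s(u, q) ∨ Γ.Crosses e s(q, v)) := by
  classical
  obtain ⟨hxy, hxP, hyP, hadj⟩ := hB
  -- Under `hΓ`, the set of edges incident to a fixed vertex that cross `e` is finite.
  have hfin : ∀ (e : Sym2 V) (a : V),
      {f : Sym2 V | f ∈ G.edgeSet ∧ a ∈ f ∧ Γ.Crosses e f}.Finite := by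
    intro e a
    by_contra hinf
    obtain ⟨F, hFsub, hFcard⟩ := Set.Infinite.exists_subset_card_eq hinf k
    exact hΓ ⟨e, a, F, hFcard, fun f hf => ⟨(hFsub hf).2.1, (hFsub hf).2.2⟩⟩
  have key : ∀ (e : Sym2 V) (a : V) (Q : Finset V),
      (∀ q ∈ Q, G.Adj a q ∧ Γ.Crosses e s(a, q)) →
      Q.card ≤ {f : Sym2 V | f ∈ G.edgeSet ∧ a ∈ f ∧ Γ.Crosses e f}.ncard := by
    intro e a Q hQ
    have hinj : Set.InjOn (fun q => s(a, q)) Q := by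
      intro q _ q' _ h
      exact Sym2.congr_right.mp h
    have himg : ↑(Q.image (fun q => s(a, q))) ⊆
        {f : Sym2 V | f ∈ G.edgeSet ∧ a ∈ f ∧ Γ.Crosses e f} := by
      intro f hf
      simp only [Finset.coe_image, Set.mem_image, Finset.mem_coe] at hf
      obtain ⟨q, hq, rfl⟩ := hf
      exact ⟨(hQ q hq).1, Sym2.mem_mk_left a q, (hQ q hq).2⟩
    calc Q.card = (Q.image (fun q => s(a, q))).card :=
          (Finset.card_image_of_injOn hinj).symm
      _ = (↑(Q.image (fun q => s(a, q))) : Set (Sym2 V)).ncard :=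
          (Set.ncard_coe_finset _).symm
      _ ≤ _ := Set.ncard_le_ncard himg (hfin e a)
  have main : ∀ e : Sym2 V, e ∈ G.edgeSet →
      (∀ q ∈ P, Γ.Crosses e s(u, q) ∨ Γ.Crosses e s(q, v)) →
      ((ℓ + 1) / 2 ≤ {f : Sym2 V | f ∈ G.edgeSet ∧ u ∈ f ∧ Γ.Crosses e f}.ncard ∨
        (ℓ + 1) / 2 ≤ {f : Sym2 V | f ∈ G.edgeSet ∧ v ∈ f ∧ Γ.Crosses e f}.ncard) := by
    intro e he hcr
    set Pu := P.filter (fun q => Γ.Crosses e s(u, q)) with hPudef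
    set Pv := P.filter (fun q => ¬ Γ.Crosses e s(u, q)) with hPvdef
    have hsplit : Pu.card + Pv.card = ℓ := by
      rw [hPudef, hPvdef, Finset.card_filter_add_card_filter_not]
      exact hcard
    have hu : Pu.card ≤ {f : Sym2 V | f ∈ G.edgeSet ∧ u ∈ f ∧ Γ.Crosses e f}.ncard := by
      refine key e u Pu (fun q hq => ?_)
      rw [hPudef, Finset.mem_filter] at hq
      exact ⟨(hadj q hq.1).1, hq.2⟩
    have hv : Pv.card ≤ {f : Sym2 V | f ∈ G.edgeSet ∧ v ∈ f ∧ Γ.Crosses e f}.ncard := by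
      refine key e v Pv (fun q hq => ?_)
      rw [hPvdef, Finset.mem_filter] at hq
      refine ⟨(hadj q hq.1).2.1.symm, ?_⟩
      have := (hcr q hq.1).resolve_left hq.2
      rwa [Sym2.eq_swap] at this
    rcases Nat.lt_or_ge Pu.card ((ℓ + 1) / 2) with h | h
    · exact Or.inr (le_trans (by omega) hv)
    · exact Or.inl (le_trans h hu)
  refine ⟨main, ?_⟩
  rintro hk ⟨e, he, hcr⟩
  have hhalf : k ≤ (ℓ + 1) / 2 := by omega
  have contra : ∀ a : V,
      k ≤ {f : Sym2 V | f ∈ G.edgeSet ∧ a ∈ f ∧ Γ.Crosses e f}.ncard → False := by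
    intro a hk'
    obtain ⟨T, hTsub, hTcard⟩ := Set.exists_subset_card_eq hk'
    have hTfin : T.Finite := (hfin e a).subset hTsub
    refine hΓ ⟨e, a, hTfin.toFinset, ?_, fun f hf => ?_⟩
    · rw [← Set.ncard_eq_toFinset_card T hTfin, hTcard]
    · have := hTsub (hTfin.mem_toFinset.mp hf)
      exact ⟨this.2.1, this.2.2⟩
  rcases main e he hcr with h | h
  · exact contra u (le_trans hhalf h)
  · exact contra v (le_trans hhalf h)
end
end
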